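/- arXiv:2010.13098 — 2 statements merged into one kernel-verified Lean document; each statement's English description precedes it below -/
import Mathlib

section
/- The map R : ℓ_∞(Γ) → c₀(Γ) defined coordinatewise by (R(x))_i = 0 if |x_i| < d(x), and (R(x))_i = (|x_i| − d(x))·sign(x_i) if |x_i| ≥ d(x), is well defined (its values lie in c₀(Γ)), fixes every point of c₀(Γ), and is 2-Lipschitz. In particular c₀(Γ) is a 2-Lipschitz retract of ℓ_∞(Γ). -/
open scoped NNReal ENNReal

noncomputable section

/-- The subset of `ℓ∞(Γ)` consisting of functions vanishing at infinity, i.e. `c₀(Γ)`. -/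
def c0set (Γ : Type*) : Set (lp (fun _ : Γ => ℝ) ∞) :=
  {a | ∀ ε : ℝ, 0 < ε → {i : Γ | ε ≤ |a i|}.Finite}

/-- The scalar soft-thresholding map in closed form. -/
def softThresh (d t : ℝ) : ℝ := t - max (-d) (min d t)

lemma softThresh_eq (d t : ℝ) (hd : 0 ≤ d) :
    (if |t| < d then 0 else (|t| - d) * Real.sign t) = softThresh d t := by
  unfold softThresh
  rcases lt_or_ge (|t|) d with h | h
  · rw [if_pos h]
    rw [abs_lt] at h
    rw [min_eq_right h.2.le, max_eq_right h.1.le]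
    ring
  · rw [if_neg (not_lt.2 h)]
    rcases lt_trichotomy t 0 with ht | ht | ht
    · rw [Real.sign_of_neg ht, abs_of_neg ht]
      have h1 : t ≤ -d := by linarith [abs_of_neg ht, h]
      rw [min_eq_right (by linarith), max_eq_left (by linarith)]
      ring
    · subst ht
      simp only [Real.sign_zero, abs_zero] at *
      have hd0 : d = 0 := le_antisymm h hd
      subst hd0
      simp
    · rw [Real.sign_of_pos ht, abs_of_pos ht] at *
      rw [min_eq_left h, max_eq_right (by linarith)]
      ring

lemma softThresh_abs (d t : ℝ) (hd : 0 ≤ d) : |softThresh d t| = max (|t| - d) 0 := by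
  unfold softThresh
  rcases lt_or_ge (|t|) d with h | h
  · have h' := abs_lt.1 h
    rw [min_eq_right h'.2.le, max_eq_right h'.1.le, sub_self, abs_zero,
      max_eq_right (by linarith)]
  · rcases lt_trichotomy t 0 with ht | ht | ht
    · have h1 : t ≤ -d := by linarith [abs_of_neg ht, h]
      rw [min_eq_right (by linarith : t ≤ d), max_eq_left h1,
        max_eq_left (by linarith [abs_of_neg ht] : (0:ℝ) ≤ |t| - d),
        abs_of_nonpos (by linarith), abs_of_neg ht]
      ring
    · subst ht
      simp only [abs_zero] at *
      have hd0 : d = 0 := le_antisymm h hd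
      subst hd0; simp
    · rw [abs_of_pos ht] at *
      rw [min_eq_left h, max_eq_right (by linarith),
        abs_of_nonneg (by linarith), max_eq_left (by linarith)]

lemma softThresh_lip (d e s t : ℝ) :
    |softThresh d s - softThresh e t| ≤ |s - t| + max |d - e| |s - t| := by
  unfold softThresh
  have h1 : |max (-d) (min d s) - max (-e) (min e t)| ≤ max |d - e| |s - t| := by
    refine le_trans (abs_max_sub_max_le_max _ _ _ _) ?_
    have h2 : |min d s - min e t| ≤ max |d - e| |s - t| := abs_min_sub_min_le_max _ _ _ _
    have h3 : |(-d) - (-e)| = |d - e| := by rw [← abs_neg]; ring_nf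
    rw [h3]
    exact max_le (le_max_left _ _) h2
  calc |s - max (-d) (min d s) - (t - max (-e) (min e t))|
      = |(s - t) - (max (-d) (min d s) - max (-e) (min e t))| := by ring_nf
    _ ≤ |s - t| + |max (-d) (min d s) - max (-e) (min e t)| := abs_sub _ _
    _ ≤ |s - t| + max |d - e| |s - t| := by linarith

/-- The map `R : ℓ∞(Γ) → c₀(Γ)` ... -/
theorem stmt1 (Γ : Type*) [Infinite Γ] :
    ∃ R : lp (fun _ : Γ => ℝ) ∞ → lp (fun _ : Γ => ℝ) ∞,
      (∀ x i, (R x : ∀ _ : Γ, ℝ) i =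
          if |x i| < Metric.infDist x (c0set Γ) then 0
          else (|x i| - Metric.infDist x (c0set Γ)) * Real.sign (x i)) ∧
      (∀ x, R x ∈ c0set Γ) ∧ (∀ a ∈ c0set Γ, R a = a) ∧ LipschitzWith 2 R := by
  classical
  haveI : Nontrivial (lp (fun _ : Γ => ℝ) ∞) := by
    obtain ⟨i⟩ := (inferInstance : Nonempty Γ)
    refine ⟨⟨0, ⟨(1 : ∀ _ : Γ, ℝ), one_memℓp_infty⟩, fun h => ?_⟩⟩
    have h0 : ((0 : lp (fun _ : Γ => ℝ) ∞) : ∀ _ : Γ, ℝ) i =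
        ((⟨(1 : ∀ _ : Γ, ℝ), one_memℓp_infty⟩ : lp (fun _ : Γ => ℝ) ∞) : ∀ _ : Γ, ℝ) i := by
      rw [h]
    simp only [lp.coeFn_zero, Pi.zero_apply] at h0
    exact zero_ne_one h0
  set S := c0set Γ
  have hS0 : (0 : lp (fun _ : Γ => ℝ) ∞) ∈ S := by
    intro ε hε
    have : {i : Γ | ε ≤ |(0 : lp (fun _ : Γ => ℝ) ∞) i|} = ∅ := by
      ext i; simp [lp.coeFn_zero, hε.not_ge]
    rw [this]; exact Set.finite_empty
  have hSne : S.Nonempty := ⟨0, hS0⟩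
  set dd : lp (fun _ : Γ => ℝ) ∞ → ℝ := fun x => Metric.infDist x S with hdd
  have hdnn : ∀ x, 0 ≤ dd x := fun x => Metric.infDist_nonneg
  -- membership in ℓ∞
  have hmem : ∀ x : lp (fun _ : Γ => ℝ) ∞, Memℓp (fun i => softThresh (dd x) (x i)) ∞ := by
    intro x
    apply memℓp_infty
    refine ⟨‖x‖, ?_⟩
    rintro - ⟨i, rfl⟩
    simp only [Real.norm_eq_abs, softThresh_abs (dd x) (x i) (hdnn x)]
    refine max_le ?_ (norm_nonneg x)
    have := lp.norm_apply_le_norm ENNReal.top_ne_zero x i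
    simp only [Real.norm_eq_abs] at this
    linarith [hdnn x]
  set R : lp (fun _ : Γ => ℝ) ∞ → lp (fun _ : Γ => ℝ) ∞ :=
    fun x => ⟨fun i => softThresh (dd x) (x i), hmem x⟩ with hR
  have hRcoe : ∀ x i, (R x : ∀ _ : Γ, ℝ) i = softThresh (dd x) (x i) := fun x i => rfl
  refine ⟨R, ?_, ?_, ?_, ?_⟩
  · intro x i
    rw [hRcoe, ← softThresh_eq _ _ (hdnn x)]
  · -- R x ∈ c0set
    intro x ε hε
    obtain ⟨a, haS, ha⟩ := (Metric.infDist_lt_iff hSne).1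
      (by linarith : Metric.infDist x S < dd x + ε / 2)
    have hsub : {i : Γ | ε ≤ |(R x : ∀ _ : Γ, ℝ) i|} ⊆ {i : Γ | ε / 2 ≤ |a i|} := by
      intro i hi
      simp only [Set.mem_setOf_eq, hRcoe, softThresh_abs _ _ (hdnn x)] at hi ⊢
      have hxi : dd x + ε ≤ |x i| := by
        rcases le_max_iff.1 (le_refl (max (|x i| - dd x) 0)) with _ | _
        · rcases max_cases (|x i| - dd x) 0 with ⟨h1, _⟩ | ⟨h1, _⟩ <;> rw [h1] at hi <;> linarith
        · rcases max_cases (|x i| - dd x) 0 with ⟨h1, _⟩ | ⟨h1, _⟩ <;> rw [h1] at hi <;> linarith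
      have hdist : |x i - a i| ≤ dist x a := by
        have := lp.norm_apply_le_norm ENNReal.top_ne_zero (x - a) i
        simpa [dist_eq_norm, lp.coeFn_sub, Real.norm_eq_abs] using this
      have : |x i| - |a i| ≤ |x i - a i| := abs_sub_abs_le_abs_sub _ _
      linarith
    exact Set.Finite.subset (haS (ε / 2) (by linarith)) hsub
  · -- fixes c₀
    intro a haS
    have hda : dd a = 0 := Metric.infDist_zero_of_mem haS
    apply lp.ext
    funext i
    rw [hRcoe, hda]
    unfold softThresh
    rcases le_or_gt (a i) 0 with h | h
    · rw [neg_zero, min_eq_right h, max_eq_left h, sub_zero]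
    · rw [neg_zero, min_eq_left h.le, max_self, sub_zero]
  · -- Lipschitz
    apply LipschitzWith.of_dist_le_mul
    intro x y
    rw [dist_eq_norm, dist_eq_norm]
    have h2 : (2 : ℝ≥0) • ‖x - y‖ = 2 * ‖x - y‖ := by
      simp [NNReal.smul_def]
    refine le_trans (le_of_eq rfl) ?_
    have key : ∀ i, ‖(R x - R y : lp (fun _ : Γ => ℝ) ∞) i‖ ≤ 2 * ‖x - y‖ := by
      intro i
      rw [lp.coeFn_sub]
      simp only [Pi.sub_apply, hRcoe, Real.norm_eq_abs]
      have h1 : |x i - y i| ≤ ‖x - y‖ := by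
        have := lp.norm_apply_le_norm ENNReal.top_ne_zero (x - y) i
        simpa [lp.coeFn_sub, Real.norm_eq_abs] using this
      have h3 : |dd x - dd y| ≤ ‖x - y‖ := by
        have := (Metric.lipschitz_infDist_pt S).dist_le_mul x y
        simpa [Real.dist_eq, dist_eq_norm] using this
      have := softThresh_lip (dd x) (dd y) (x i) (y i)
      have h4 : max |dd x - dd y| |x i - y i| ≤ ‖x - y‖ := max_le h3 h1
      linarith
    calc ‖R x - R y‖ ≤ 2 * ‖x - y‖ :=
          lp.norm_le_of_forall_le (by positivity) key
      _ ≤ (2 : ℝ≥0) * ‖x - y‖ := by norm_num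
end
end

section
/- Let E be the closed linear span in ℓ_∞ of the canonical copy of c (convergent sequences) together with the characteristic functions χ_{N_i} of an almost disjoint family {N_i : i ∈ I} of infinite subsets of ℕ. Then E is isometrically isomorphic to C(K_E) for a compact Hausdorff space K_E which is scattered of Cantor–Bendixson height 3 (a Mrówka–Isbell compactum). -/
open scoped NNReal ENNReal Classical

noncomputable section

def cbDeriv {K : Type*} [TopologicalSpace K] (s : Set K) : Set K :=
  {x ∈ s | x ∈ closure (s \ {x})}

namespace Mrowka

variable (A : Set (Set ℕ))

def K : Type := Option (ℕ ⊕ ↥A)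

def pn (n : ℕ) : K A := some (Sum.inl n)
def pa (a : ↥A) : K A := some (Sum.inr a)
def pt : K A := none

variable {A}

@[simp] lemma pn_inj {n m : ℕ} : pn A n = pn A m ↔ n = m := by
  constructor
  · intro h
    simpa using (show (some (Sum.inl n) : Option (ℕ ⊕ ↥A)) = some (Sum.inl m) from h)
  · rintro rfl; rfl

@[simp] lemma pa_inj {a b : ↥A} : pa A a = pa A b ↔ a = b := by
  constructor
  · intro h
    simpa using (show (some (Sum.inr a) : Option (ℕ ⊕ ↥A)) = some (Sum.inr b) from h)
  · rintro rfl; rfl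

@[simp] lemma pn_ne_pa {n a} : pn A n ≠ pa A a := fun h => by
  simpa using (show (some (Sum.inl n) : Option (ℕ ⊕ ↥A)) = some (Sum.inr a) from h)

@[simp] lemma pa_ne_pn {n a} : pa A a ≠ pn A n := fun h => pn_ne_pa h.symm

@[simp] lemma pn_ne_pt {n} : pn A n ≠ pt A := fun h => by
  simpa using (show (some (Sum.inl n) : Option (ℕ ⊕ ↥A)) = none from h)

@[simp] lemma pt_ne_pn {n} : pt A ≠ pn A n := fun h => pn_ne_pt h.symm

@[simp] lemma pa_ne_pt {a} : pa A a ≠ pt A := fun h => by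
  simpa using (show (some (Sum.inr a) : Option (ℕ ⊕ ↥A)) = none from h)

@[simp] lemma pt_ne_pa {a} : pt A ≠ pa A a := fun h => pa_ne_pt h.symm

lemma casesOn' (x : K A) : (∃ n, x = pn A n) ∨ (∃ a, x = pa A a) ∨ x = pt A := by
  rcases h : (show Option (ℕ ⊕ ↥A) from x) with _ | (n | a)
  · exact Or.inr (Or.inr rfl)
  · exact Or.inl ⟨n, rfl⟩
  · exact Or.inr (Or.inl ⟨a, rfl⟩)

/-- the set of family points missing from a set. -/
def badA (U : Set (K A)) : Set ↥A := {a : ↥A | pa A a ∉ U}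

/-- the set of natural-number points missing from a set. -/
def badN (U : Set (K A)) : Set ℕ := {n : ℕ | pn A n ∉ U}

def Cond (U : Set (K A)) : Prop :=
  (∀ a : ↥A, pa A a ∈ U → {n | n ∈ (a : Set ℕ) ∧ pn A n ∉ U}.Finite) ∧
  (pt A ∈ U → (badA U).Finite ∧
    (badN U \ ⋃ a ∈ badA U, (a : Set ℕ)).Finite)

instance : TopologicalSpace (K A) where
  IsOpen := Cond
  isOpen_univ := by
    refine ⟨fun a _ => ?_, fun _ => ⟨?_, ?_⟩⟩
    · convert Set.finite_empty using 2
      simp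
    · convert Set.finite_empty using 2
      simp [badA]
    · refine Set.Finite.subset Set.finite_empty ?_
      rintro n ⟨hn, -⟩
      exact hn (Set.mem_univ _)
  isOpen_inter := by
    rintro U V ⟨hU1, hU2⟩ ⟨hV1, hV2⟩
    constructor
    · rintro a ⟨haU, haV⟩
      refine ((hU1 a haU).union (hV1 a haV)).subset ?_
      rintro n ⟨hna, hn⟩
      by_cases hnU : pn A n ∈ U
      · exact Or.inr ⟨hna, fun hV' => hn ⟨hnU, hV'⟩⟩
      · exact Or.inl ⟨hna, hnU⟩
    · rintro ⟨hptU, hptV⟩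
      obtain ⟨hTU, hFU⟩ := hU2 hptU
      obtain ⟨hTV, hFV⟩ := hV2 hptV
      constructor
      · refine (hTU.union hTV).subset ?_
        intro a ha
        by_cases h : pa A a ∈ U
        · exact Or.inr (fun h' => ha ⟨h, h'⟩)
        · exact Or.inl h
      · refine (hFU.union hFV).subset ?_
        rintro n ⟨hn, hn2⟩
        have hTsub : ∀ W : Set (K A), badA W ⊆ badA (U ∩ V) →
            n ∉ ⋃ a ∈ badA W, (a : Set ℕ) := by
          intro W hW hmem
          obtain ⟨a, ha, hna⟩ := Set.mem_iUnion₂.mp hmem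
          exact hn2 (Set.mem_biUnion (hW ha) hna)
        by_cases hnU : pn A n ∈ U
        · have hnV : pn A n ∉ V := fun h => hn ⟨hnU, h⟩
          exact Or.inr ⟨hnV, hTsub V (fun a ha h' => ha h'.2)⟩
        · exact Or.inl ⟨hnU, hTsub U (fun a ha h' => ha h'.1)⟩
  isOpen_sUnion := by
    intro S hS
    constructor
    · intro a ha
      obtain ⟨U, hUS, haU⟩ := ha
      refine ((hS U hUS).1 a haU).subset ?_
      rintro n ⟨hna, hn⟩
      exact ⟨hna, fun h => hn ⟨U, hUS, h⟩⟩
    · rintro ⟨U, hUS, hptU⟩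
      obtain ⟨hTU, hFU⟩ := (hS U hUS).2 hptU
      have hbadA : badA (⋃₀ S) ⊆ badA U := fun a ha h => ha ⟨U, hUS, h⟩
      refine ⟨hTU.subset hbadA, ?_⟩
      set X := badN (⋃₀ S) \ ⋃ b ∈ badA (⋃₀ S), (b : Set ℕ) with hXdef
      have key : ∀ a ∈ badA U, (X ∩ (a : Set ℕ)).Finite := by
        intro a _
        by_cases haS : pa A a ∈ ⋃₀ S
        · obtain ⟨V, hVS, haV⟩ := haS
          refine ((hS V hVS).1 a haV).subset ?_
          rintro n ⟨⟨hn, -⟩, hna⟩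
          exact ⟨hna, fun h => hn ⟨V, hVS, h⟩⟩
        · refine Set.Finite.subset Set.finite_empty ?_
          rintro n ⟨⟨-, hn2⟩, hna⟩
          exact (hn2 (Set.mem_biUnion haS hna)).elim
      refine (hFU.union (hTU.biUnion key)).subset ?_
      rintro n ⟨hn, hn2⟩
      by_cases h : n ∈ ⋃ a ∈ badA U, (a : Set ℕ)
      · obtain ⟨a, ha, hna⟩ := Set.mem_iUnion₂.mp h
        exact Or.inr (Set.mem_biUnion ha ⟨⟨hn, hn2⟩, hna⟩)
      · exact Or.inl ⟨fun hU' => hn ⟨U, hUS, hU'⟩, h⟩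

lemma isOpen_iff {U : Set (K A)} : IsOpen U ↔ Cond U := Iff.rfl

lemma isOpen_singleton_pn {n : ℕ} : IsOpen ({pn A n} : Set (K A)) := by
  refine ⟨fun a ha => ?_, fun h => ?_⟩
  · exact absurd ha pa_ne_pn
  · exact absurd h pt_ne_pn

section AD

variable (hAD : ∀ a b : ↥A, a ≠ b → ((a : Set ℕ) ∩ (b : Set ℕ)).Finite)

include hAD

lemma isOpen_of_mem_pt {U : Set (K A)} (h0 : pt A ∈ U) (h1 : (badA U).Finite)
    (h2 : (badN U \ ⋃ a ∈ badA U, (a : Set ℕ)).Finite) : IsOpen U := by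
  refine ⟨fun a ha => ?_, fun _ => ⟨h1, h2⟩⟩
  have hne : ∀ b ∈ badA U, a ≠ b := fun b hb he => hb (he ▸ ha)
  refine (h2.union (h1.biUnion fun b hb => hAD a b (hne b hb))).subset ?_
  rintro n ⟨hna, hn⟩
  by_cases h : n ∈ ⋃ b ∈ badA U, (b : Set ℕ)
  · obtain ⟨b, hb, hnb⟩ := Set.mem_iUnion₂.mp h
    exact Or.inr (Set.mem_biUnion hb ⟨hna, hnb⟩)
  · exact Or.inl ⟨hn, h⟩

lemma mem_nhds_pt {U : Set (K A)} : U ∈ nhds (pt A) ↔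
    pt A ∈ U ∧ (badA U).Finite ∧
      ∃ s : Finset ↥A, (badN U \ ⋃ a ∈ s, (a : Set ℕ)).Finite := by
  constructor
  · intro h
    obtain ⟨V, hVU, hV, hptV⟩ := mem_nhds_iff.mp h
    obtain ⟨hTV, hFV⟩ := hV.2 hptV
    refine ⟨hVU hptV, hTV.subset (fun a ha h' => ha (hVU h')), hTV.toFinset, ?_⟩
    refine hFV.subset ?_
    rintro n ⟨hn, hn2⟩
    refine ⟨fun h' => hn (hVU h'), fun hmem => hn2 ?_⟩
    obtain ⟨a, ha, hna⟩ := Set.mem_iUnion₂.mp hmem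
    exact Set.mem_biUnion (hTV.mem_toFinset.mpr ha) hna
  · rintro ⟨h0, h1, s, h2⟩
    set V := U \ (pa A '' (s : Set ↥A)) with hVdef
    have hptV : pt A ∈ V := ⟨h0, fun hmem => by
      obtain ⟨b, -, he⟩ := hmem; exact pa_ne_pt he⟩
    have hbadA : badA V ⊆ badA U ∪ (s : Set ↥A) := by
      intro a ha
      by_cases h : pa A a ∈ U
      · refine Or.inr ?_
        by_contra hs
        exact ha ⟨h, fun ⟨b, hb, he⟩ => hs (pa_inj.mp he ▸ hb)⟩
      · exact Or.inl h
    have hVopen : IsOpen V := by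
      refine isOpen_of_mem_pt hAD hptV ((h1.union s.finite_toSet).subset hbadA) ?_
      refine h2.subset ?_
      rintro n ⟨hn, hn2⟩
      have hsub : (s : Set ↥A) ⊆ badA V := by
        intro a ha h'
        exact h'.2 ⟨a, ha, rfl⟩
      refine ⟨fun h' => hn ⟨h', fun hmem' => by
        obtain ⟨b, -, he⟩ := hmem'; exact pa_ne_pn he⟩, fun hmem => hn2 ?_⟩
      obtain ⟨a, ha, hna⟩ := Set.mem_iUnion₂.mp hmem
      exact Set.mem_biUnion (hsub ha) hna
    exact mem_nhds_iff.mpr ⟨V, Set.diff_subset, hVopen, hptV⟩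

end AD

lemma mem_nhds_pa {a : ↥A} {U : Set (K A)} : U ∈ nhds (pa A a) ↔
    pa A a ∈ U ∧ {n | n ∈ (a : Set ℕ) ∧ pn A n ∉ U}.Finite := by
  constructor
  · intro h
    obtain ⟨V, hVU, hV, haV⟩ := mem_nhds_iff.mp h
    refine ⟨hVU haV, (hV.1 a haV).subset ?_⟩
    rintro n ⟨hna, hn⟩
    exact ⟨hna, fun h' => hn (hVU h')⟩
  · rintro ⟨h0, h1⟩
    set V := insert (pa A a) (pn A '' {n | n ∈ (a : Set ℕ) ∧ pn A n ∈ U}) with hVdef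
    have hVopen : IsOpen V := by
      refine ⟨fun b hb => ?_, fun h => ?_⟩
      · rcases hb with hb | ⟨m, -, hm⟩
        · replace hb : b = a := pa_inj.mp hb
          subst hb
          refine h1.subset ?_
          rintro n ⟨hna, hn⟩
          exact ⟨hna, fun h' => hn (Or.inr ⟨n, ⟨hna, h'⟩, rfl⟩)⟩
        · exact (pn_ne_pa hm).elim
      · rcases h with h | ⟨m, -, hm⟩
        · exact absurd h pt_ne_pa
        · exact (pn_ne_pt hm).elim
    refine mem_nhds_iff.mpr ⟨V, ?_, hVopen, Or.inl rfl⟩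
    rintro x (rfl | ⟨m, hm, rfl⟩)
    · exact h0
    · exact hm.2

lemma mem_nhds_pn {n : ℕ} {U : Set (K A)} : U ∈ nhds (pn A n) ↔ pn A n ∈ U :=
  ⟨fun h => mem_of_mem_nhds h,
   fun h => mem_nhds_iff.mpr ⟨{pn A n}, by simpa using h, isOpen_singleton_pn, rfl⟩⟩

instance : CompactSpace (K A) := by
  constructor
  apply isCompact_of_finite_subcover
  intro ι U hU hcov
  have hch : ∀ x : K A, ∃ i, x ∈ U i := fun x => Set.mem_iUnion.mp (hcov (Set.mem_univ x))
  choose c hc using hch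
  set i0 := c (pt A) with hi0
  obtain ⟨hT, hF⟩ := (hU i0).2 (hc (pt A))
  set L : Set ℕ := {n | pn A n ∉ U i0 ∧ ∀ a ∈ badA (U i0), pn A n ∉ U (c (pa A a))} with hLdef
  have hL : L.Finite := by
    refine (hF.union (hT.biUnion fun a _ => (hU (c (pa A a))).1 a (hc _))).subset ?_
    rintro n ⟨hn1, hn2⟩
    by_cases h : n ∈ ⋃ a ∈ badA (U i0), (a : Set ℕ)
    · obtain ⟨a, ha, hna⟩ := Set.mem_iUnion₂.mp h
      exact Or.inr (Set.mem_biUnion ha ⟨hna, hn2 a ha⟩)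
    · exact Or.inl ⟨hn1, h⟩
  refine ⟨insert i0 ((hT.toFinset.image fun a => c (pa A a)) ∪
    (hL.toFinset.image fun n => c (pn A n))), fun x _ => ?_⟩
  rcases casesOn' x with ⟨n, rfl⟩ | ⟨a, rfl⟩ | rfl
  · by_cases h : pn A n ∈ U i0
    · exact Set.mem_biUnion (Finset.mem_insert_self _ _) h
    · by_cases h2 : ∀ a ∈ badA (U i0), pn A n ∉ U (c (pa A a))
      · refine Set.mem_biUnion ?_ (hc (pn A n))
        refine Finset.mem_insert_of_mem (Finset.mem_union_right _ ?_)
        exact Finset.mem_image.mpr ⟨n, hL.mem_toFinset.mpr ⟨h, h2⟩, rfl⟩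
      · push_neg at h2
        obtain ⟨a, ha, hna⟩ := h2
        refine Set.mem_biUnion ?_ hna
        exact Finset.mem_insert_of_mem (Finset.mem_union_left _
          (Finset.mem_image.mpr ⟨a, hT.mem_toFinset.mpr ha, rfl⟩))
  · by_cases h : pa A a ∈ U i0
    · exact Set.mem_biUnion (Finset.mem_insert_self _ _) h
    · refine Set.mem_biUnion ?_ (hc (pa A a))
      exact Finset.mem_insert_of_mem (Finset.mem_union_left _
        (Finset.mem_image.mpr ⟨a, hT.mem_toFinset.mpr h, rfl⟩))
  · exact Set.mem_biUnion (Finset.mem_insert_self _ _) (hc (pt A))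


section Families

variable (hAD : ∀ a b : ↥A, a ≠ b → ((a : Set ℕ) ∩ (b : Set ℕ)).Finite)
variable (hA1 : ∀ a : ↥A, (a : Set ℕ).Infinite)
variable (hA3 : A.Infinite)

/-- basic neighborhood of a family point -/
def uA (a : ↥A) (s : Set ℕ) : Set (K A) := insert (pa A a) (pn A '' ((a : Set ℕ) \ s))

@[simp] lemma mem_uA_pa {a b : ↥A} {s : Set ℕ} : pa A b ∈ uA a s ↔ b = a := by
  constructor
  · rintro (h | ⟨m, -, hm⟩)
    · exact pa_inj.mp h
    · exact (pn_ne_pa hm).elim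
  · rintro rfl; exact Or.inl rfl

@[simp] lemma mem_uA_pn {a : ↥A} {s : Set ℕ} {m : ℕ} :
    pn A m ∈ uA a s ↔ m ∈ (a : Set ℕ) \ s := by
  constructor
  · rintro (h | ⟨k, hk, hk2⟩)
    · exact (pn_ne_pa h).elim
    · exact pn_inj.mp hk2 ▸ hk
  · intro h; exact Or.inr ⟨m, h, rfl⟩

@[simp] lemma pt_not_mem_uA {a : ↥A} {s : Set ℕ} : pt A ∉ uA a s := by
  rintro (h | ⟨m, -, hm⟩)
  · exact pt_ne_pa h
  · exact pn_ne_pt hm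

include hAD in
lemma isOpen_uA (a : ↥A) {s : Set ℕ} (hs : s.Finite) : IsOpen (uA a s) := by
  refine ⟨fun b hb => ?_, fun h => (pt_not_mem_uA h).elim⟩
  replace hb : b = a := mem_uA_pa.mp hb
  subst hb
  refine hs.subset ?_
  rintro m ⟨hmb, hm⟩
  by_contra hms
  exact hm (mem_uA_pn.mpr ⟨hmb, hms⟩)

include hAD in
lemma isOpen_compl_uA (a : ↥A) (s : Set ℕ) : IsOpen ((uA a s)ᶜ : Set (K A)) := by
  refine isOpen_of_mem_pt hAD (fun h => pt_not_mem_uA h) ?_ ?_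
  · refine (Set.finite_singleton a).subset ?_
    intro b hb
    simp only [badA, Set.mem_setOf_eq, Set.mem_compl_iff, not_not] at hb
    exact mem_uA_pa.mp hb
  · refine Set.Finite.subset Set.finite_empty ?_
    rintro m ⟨hm, hm2⟩
    simp only [badN, Set.mem_setOf_eq, Set.mem_compl_iff, not_not, mem_uA_pn] at hm
    refine (hm2 (Set.mem_biUnion ?_ hm.1)).elim
    show a ∈ badA (uA a s)ᶜ
    simp only [badA, Set.mem_setOf_eq, Set.mem_compl_iff, not_not]
    exact Or.inl rfl

include hAD in
lemma t2space : T2Space (K A) := by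
  have sep_pn : ∀ (n : ℕ) (z : K A), z ≠ pn A n →
      ∃ u v : Set (K A), IsOpen u ∧ IsOpen v ∧ pn A n ∈ u ∧ z ∈ v ∧ Disjoint u v := by
    intro n z hz
    refine ⟨{pn A n}, {pn A n}ᶜ, isOpen_singleton_pn, ?_, rfl, hz, disjoint_compl_right⟩
    refine ⟨fun a _ => ?_, fun _ => ⟨?_, ?_⟩⟩
    · refine (Set.finite_singleton n).subset ?_
      rintro m ⟨-, hm⟩
      simp only [Set.mem_compl_iff, not_not, Set.mem_singleton_iff] at hm
      exact pn_inj.mp hm ▸ rfl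
    · refine Set.Finite.subset Set.finite_empty ?_
      intro a ha
      simp only [badA, Set.mem_setOf_eq, Set.mem_compl_iff, not_not] at ha
      exact (pa_ne_pn ha).elim
    · refine Set.Finite.subset (Set.finite_singleton n) ?_
      rintro m ⟨hm, -⟩
      simp only [badN, Set.mem_setOf_eq, Set.mem_compl_iff, not_not] at hm
      exact pn_inj.mp hm ▸ rfl
  have swap : ∀ x y : K A, (∃ u v : Set (K A), IsOpen u ∧ IsOpen v ∧ x ∈ u ∧ y ∈ v ∧ Disjoint u v) →
      ∃ u v : Set (K A), IsOpen u ∧ IsOpen v ∧ y ∈ u ∧ x ∈ v ∧ Disjoint u v := by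
    rintro x y ⟨u, v, h1, h2, h3, h4, h5⟩
    exact ⟨v, u, h2, h1, h4, h3, h5.symm⟩
  constructor
  intro x y hxy
  rcases casesOn' x with ⟨n, rfl⟩ | ⟨a, rfl⟩ | rfl
  · exact sep_pn n y (Ne.symm hxy)
  · rcases casesOn' y with ⟨m, rfl⟩ | ⟨b, rfl⟩ | rfl
    · exact swap _ _ (sep_pn m _ hxy)
    · have hab : a ≠ b := fun h => hxy (by rw [h])
      refine ⟨uA a ((a : Set ℕ) ∩ b), uA b ∅, isOpen_uA hAD a (hAD a b hab),
        isOpen_uA hAD b Set.finite_empty, mem_uA_pa.mpr rfl, mem_uA_pa.mpr rfl, ?_⟩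
      rw [Set.disjoint_left]
      intro z hz1 hz2
      rcases casesOn' z with ⟨k, rfl⟩ | ⟨c, rfl⟩ | rfl
      · have h1 := mem_uA_pn.mp hz1
        have h2 := mem_uA_pn.mp hz2
        exact h1.2 ⟨h1.1, h2.1⟩
      · exact hab (mem_uA_pa.mp hz1 ▸ mem_uA_pa.mp hz2)
      · exact pt_not_mem_uA hz1
    · exact ⟨uA a ∅, (uA a ∅)ᶜ, isOpen_uA hAD a Set.finite_empty, isOpen_compl_uA hAD a ∅,
        mem_uA_pa.mpr rfl, fun h => pt_not_mem_uA h, disjoint_compl_right⟩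
  · rcases casesOn' y with ⟨m, rfl⟩ | ⟨b, rfl⟩ | rfl
    · exact swap _ _ (sep_pn m _ hxy)
    · exact swap _ _ ⟨uA b ∅, (uA b ∅)ᶜ, isOpen_uA hAD b Set.finite_empty,
        isOpen_compl_uA hAD b ∅, mem_uA_pa.mpr rfl, fun h => pt_not_mem_uA h,
        disjoint_compl_right⟩
    · exact absurd rfl hxy

include hA3 in
lemma exists_pa_mem {U : Set (K A)} (hT : (badA U).Finite) : ∃ b : ↥A, pa A b ∈ U := by
  have : Infinite ↥A := Set.infinite_coe_iff.mpr hA3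
  obtain ⟨b, -, hb⟩ := (Set.infinite_univ.diff hT).nonempty
  exact ⟨b, not_not.mp hb⟩

include hAD hA1 hA3 in
lemma denseRange_pn : DenseRange (pn A) := by
  intro x
  rw [mem_closure_iff]
  intro U hUopen hxU
  rcases casesOn' x with ⟨n, rfl⟩ | ⟨a, rfl⟩ | rfl
  · exact ⟨pn A n, hxU, n, rfl⟩
  · have hfin := hUopen.1 a hxU
    obtain ⟨m, hm⟩ := ((hA1 a).diff hfin).nonempty
    have hmU : pn A m ∈ U := by
      by_contra h
      exact hm.2 ⟨hm.1, h⟩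
    exact ⟨pn A m, hmU, m, rfl⟩
  · obtain ⟨hT, hF⟩ := hUopen.2 hxU
    by_contra hno
    rw [Set.not_nonempty_iff_eq_empty] at hno
    have hall : ∀ n, pn A n ∉ U := by
      intro n h
      exact Set.eq_empty_iff_forall_notMem.mp hno (pn A n) ⟨h, n, rfl⟩
    have : Infinite ↥A := Set.infinite_coe_iff.mpr hA3
    obtain ⟨b, -, hb⟩ := ((Set.infinite_univ (α := ↥A)).diff hT).nonempty
    have hbfin : ((b : Set ℕ)).Finite := by
      refine (hF.union (hT.biUnion fun a ha => hAD b a (fun he => hb (by rw [he]; exact ha)))).subset ?_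
      intro m hmb
      by_cases h : m ∈ ⋃ a ∈ badA U, (a : Set ℕ)
      · obtain ⟨a, ha, hma⟩ := Set.mem_iUnion₂.mp h
        exact Or.inr (Set.mem_biUnion ha ⟨hmb, hma⟩)
      · exact Or.inl ⟨hall m, h⟩
    exact hA1 b hbfin

include hA1 hA3 in
lemma cbDeriv_univ : cbDeriv (Set.univ : Set (K A)) = {pt A} ∪ Set.range (pa A) := by
  ext x
  simp only [cbDeriv, Set.mem_setOf_eq, Set.mem_univ, true_and, Set.mem_union,
    Set.mem_singleton_iff, Set.mem_range]
  constructor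
  · intro hx
    rcases casesOn' x with ⟨n, rfl⟩ | ⟨a, rfl⟩ | rfl
    · exfalso
      rw [mem_closure_iff] at hx
      obtain ⟨y, hy1, hy2⟩ := hx _ isOpen_singleton_pn rfl
      exact hy2.2 hy1
    · exact Or.inr ⟨a, rfl⟩
    · exact Or.inl rfl
  · intro hx
    have main : ∀ z : K A, (∀ U, IsOpen U → z ∈ U → ∃ y ∈ U, y ≠ z) →
        z ∈ closure (Set.univ \ {z}) := by
      intro z hz
      rw [mem_closure_iff]
      intro U hU hzU
      obtain ⟨y, hyU, hyz⟩ := hz U hU hzU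
      exact ⟨y, hyU, Set.mem_univ y, hyz⟩
    rcases hx with rfl | ⟨a, rfl⟩
    · refine main _ (fun U hU hzU => ?_)
      obtain ⟨hT, -⟩ := hU.2 hzU
      obtain ⟨b, hb⟩ := exists_pa_mem hA3 hT
      exact ⟨pa A b, hb, pa_ne_pt⟩
    · refine main _ (fun U hU hzU => ?_)
      have hfin := hU.1 a hzU
      obtain ⟨m, hm⟩ := ((hA1 a).diff hfin).nonempty
      have hmU : pn A m ∈ U := by
        by_contra h
        exact hm.2 ⟨hm.1, h⟩
      exact ⟨pn A m, hmU, pn_ne_pa⟩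

include hAD hA3 in
lemma cbDeriv_D1 : cbDeriv ({pt A} ∪ Set.range (pa A)) = {pt A} := by
  ext x
  simp only [cbDeriv, Set.mem_setOf_eq, Set.mem_union, Set.mem_singleton_iff, Set.mem_range]
  constructor
  · rintro ⟨hx1, hx2⟩
    rcases hx1 with rfl | ⟨a, rfl⟩
    · rfl
    · exfalso
      rw [mem_closure_iff] at hx2
      obtain ⟨y, hyU, hymem⟩ := hx2 (uA a ∅) (isOpen_uA hAD a Set.finite_empty)
        (mem_uA_pa.mpr rfl)
      rcases hymem.1 with rfl | ⟨b, rfl⟩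
      · exact pt_not_mem_uA hyU
      · exact hymem.2 (by rw [mem_uA_pa.mp hyU]; exact rfl)
  · rintro rfl
    refine ⟨Or.inl rfl, ?_⟩
    rw [mem_closure_iff]
    intro U hU hptU
    obtain ⟨hT, -⟩ := hU.2 hptU
    obtain ⟨b, hb⟩ := exists_pa_mem hA3 hT
    exact ⟨pa A b, hb, Or.inr ⟨b, rfl⟩, pa_ne_pt⟩

lemma cbDeriv_pt : cbDeriv ({pt A} : Set (K A)) = ∅ := by
  ext x
  simp only [cbDeriv, Set.mem_setOf_eq, Set.mem_singleton_iff, Set.mem_empty_iff_false,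
    iff_false, not_and]
  rintro rfl
  have : ({pt A} : Set (K A)) \ {pt A} = ∅ := Set.diff_self
  rw [this, closure_empty]
  exact Set.notMem_empty _

end Families


/-! ### The function-space side -/

abbrev lpinf := lp (fun _ : ℕ => ℝ) ∞

def indSeq (s : Set ℕ) : lpinf :=
  ⟨fun n => if n ∈ s then (1 : ℝ) else 0, memℓp_infty ⟨1, by
    rintro x ⟨n, rfl⟩
    dsimp only
    split <;> simp⟩⟩

@[simp] lemma indSeq_apply (s : Set ℕ) (n : ℕ) :
    (indSeq s : ∀ _ : ℕ, ℝ) n = if n ∈ s then (1 : ℝ) else 0 := rfl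

/-- The generating set. -/
def Gset (A : Set (Set ℕ)) : Set lpinf :=
  {x : lpinf | ∃ l : ℝ, Filter.Tendsto (fun n => x n) Filter.atTop (nhds l)} ∪ (indSeq '' A)

def EA (A : Set (Set ℕ)) : Submodule ℝ lpinf :=
  (Submodule.span ℝ (Gset A)).topologicalClosure

lemma lp_sum_apply {ι : Type*} (s : Finset ι) (g : ι → lpinf) (n : ℕ) :
    ((∑ i ∈ s, g i : lpinf) : ∀ _ : ℕ, ℝ) n = ∑ i ∈ s, (g i : ∀ _ : ℕ, ℝ) n := by
  induction s using Finset.cons_induction with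
  | empty => simp
  | cons i s his ih => rw [Finset.sum_cons, lp.coeFn_add, Pi.add_apply, ih, Finset.sum_cons]

section Maps

variable {A : Set (Set ℕ)}

/-- extend a triple of value assignments to a function on `K A`. -/
def tri (u : ℕ → ℝ) (v : ↥A → ℝ) (w : ℝ) : K A → ℝ := fun y =>
  Option.elim (show Option (ℕ ⊕ ↥A) from y) w (Sum.elim u v)

@[simp] lemma tri_pn {u v w} {n : ℕ} : tri (A := A) u v w (pn A n) = u n := rfl
@[simp] lemma tri_pa {u v w} {a : ↥A} : tri (A := A) u v w (pa A a) = v a := rfl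
@[simp] lemma tri_pt {u v w} : tri (A := A) u v w (pt A) = w := rfl

variable (hAD : ∀ a b : ↥A, a ≠ b → ((a : Set ℕ) ∩ (b : Set ℕ)).Finite)
variable (hA1 : ∀ a : ↥A, (a : Set ℕ).Infinite)
variable (hA3 : A.Infinite)

include hAD in
lemma continuous_tri {u : ℕ → ℝ} {v : ↥A → ℝ} {w : ℝ}
    (h1 : ∀ a : ↥A, ∀ ε : ℝ, 0 < ε → {n | n ∈ (a : Set ℕ) ∧ ε ≤ |u n - v a|}.Finite)
    (h2 : ∀ ε : ℝ, 0 < ε → {a : ↥A | ε ≤ |v a - w|}.Finite)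
    (h3 : ∀ ε : ℝ, 0 < ε →
      ∃ s : Finset ↥A, ({n : ℕ | ε ≤ |u n - w|} \ ⋃ a ∈ s, (a : Set ℕ)).Finite) :
    Continuous (tri u v w) := by
  rw [continuous_iff_continuousAt]
  intro x
  rcases casesOn' x with ⟨n, rfl⟩ | ⟨a, rfl⟩ | rfl
  · intro s hs
    rw [Filter.mem_map]
    refine Filter.mem_of_superset (isOpen_singleton_pn.mem_nhds rfl) ?_
    intro y hy
    have hy' : y = pn A n := hy
    subst hy'
    exact Set.mem_preimage.mpr (mem_of_mem_nhds hs)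
  · rw [ContinuousAt, Metric.tendsto_nhds]
    intro ε hε
    show {y : K A | dist (tri u v w y) (tri u v w (pa A a)) < ε} ∈ nhds (pa A a)
    rw [mem_nhds_pa]
    constructor
    · simp only [Set.mem_setOf_eq, dist_self]
      exact hε
    · refine (h1 a ε hε).subset ?_
      rintro n ⟨hna, hn⟩
      refine ⟨hna, ?_⟩
      simp only [Set.mem_setOf_eq, tri_pn, tri_pa, Real.dist_eq, not_lt] at hn ⊢
      exact hn
  · rw [ContinuousAt, Metric.tendsto_nhds]
    intro ε hε
    obtain ⟨s, hs⟩ := h3 ε hε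
    show {y : K A | dist (tri u v w y) (tri u v w (pt A)) < ε} ∈ nhds (pt A)
    rw [mem_nhds_pt hAD]
    refine ⟨?_, ?_, s, ?_⟩
    · simp only [Set.mem_setOf_eq, dist_self]
      exact hε
    · refine (h2 ε hε).subset ?_
      intro a ha
      simp only [badA, Set.mem_setOf_eq, tri_pa, tri_pt, Real.dist_eq, not_lt] at ha
      exact ha
    · refine hs.subset ?_
      rintro n ⟨hn, hn2⟩
      simp only [badN, Set.mem_setOf_eq, tri_pn, tri_pt, Real.dist_eq, not_lt] at hn
      exact ⟨hn, hn2⟩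

def toSeq (f : C(K A, ℝ)) : lpinf :=
  ⟨fun n => f (pn A n), memℓp_infty ⟨‖f‖, by
    rintro x ⟨n, rfl⟩
    exact f.norm_coe_le_norm (pn A n)⟩⟩

@[simp] lemma toSeq_apply (f : C(K A, ℝ)) (n : ℕ) : (toSeq f : ∀ _ : ℕ, ℝ) n = f (pn A n) := rfl

variable (A) in
def toSeqL : C(K A, ℝ) →ₗ[ℝ] lpinf where
  toFun := toSeq
  map_add' f g := by
    apply lp.ext
    rw [lp.coeFn_add]
    funext n
    simp [toSeq]
  map_smul' c f := by
    apply lp.ext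
    rw [lp.coeFn_smul]
    funext n
    simp [toSeq]

@[simp] lemma toSeqL_apply (f : C(K A, ℝ)) : toSeqL A f = toSeq f := rfl

include hAD hA1 hA3 in
lemma norm_toSeq (f : C(K A, ℝ)) : ‖toSeq f‖ = ‖f‖ := by
  apply le_antisymm
  · exact lp.norm_le_of_forall_le (norm_nonneg f) (fun n => f.norm_coe_le_norm (pn A n))
  · rw [ContinuousMap.norm_le f (norm_nonneg _)]
    intro x
    have hdense := denseRange_pn hAD hA1 hA3
    have hclosed : IsClosed {y : K A | ‖f y‖ ≤ ‖toSeq f‖} :=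
      isClosed_le f.continuous.norm continuous_const
    have hsub : closure (Set.range (pn A)) ⊆ {y : K A | ‖f y‖ ≤ ‖toSeq f‖} := by
      refine closure_minimal ?_ hclosed
      rintro y ⟨n, rfl⟩
      calc ‖f (pn A n)‖ = ‖(toSeq f : ∀ _ : ℕ, ℝ) n‖ := rfl
        _ ≤ ‖toSeq f‖ := lp.norm_apply_le_norm ENNReal.top_ne_zero (toSeq f) n
    exact hsub (hdense x)

include hAD in
lemma exists_toSeq_eq_of_tendsto (x : lpinf) (l : ℝ)
    (hx : Filter.Tendsto (fun n => x n) Filter.atTop (nhds l)) :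
    ∃ f : C(K A, ℝ), toSeq f = x := by
  have hfin : ∀ ε : ℝ, 0 < ε → {n : ℕ | ε ≤ |x n - l|}.Finite := by
    intro ε hε
    have h := Metric.tendsto_nhds.mp hx ε hε
    rw [← Nat.cofinite_eq_atTop, Filter.eventually_cofinite] at h
    refine h.subset ?_
    intro n hn
    simp only [Set.mem_setOf_eq, Real.dist_eq, not_lt]
    exact hn
  have hcont : Continuous (tri (A := A) (fun n => x n) (fun _ => l) l) := by
    apply continuous_tri hAD
    · intro a ε hε
      exact (hfin ε hε).subset (fun n hn => hn.2)
    · intro ε hε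
      refine Set.Finite.subset Set.finite_empty ?_
      intro a ha
      simp only [Set.mem_setOf_eq, sub_self, abs_zero] at ha
      exact absurd ha (not_le.mpr hε)
    · exact fun ε hε => ⟨∅, (hfin ε hε).subset (fun n hn => hn.1)⟩
  exact ⟨⟨_, hcont⟩, lp.ext (funext fun n => rfl)⟩

include hAD in
lemma exists_toSeq_eq_indSeq (a : ↥A) :
    ∃ f : C(K A, ℝ), toSeq f = indSeq (a : Set ℕ) := by
  have hcont : Continuous (tri (A := A) (fun n => if n ∈ (a : Set ℕ) then (1:ℝ) else 0)
      (fun b => if b = a then (1:ℝ) else 0) 0) := by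
    apply continuous_tri hAD
    · intro b ε hε
      by_cases hba : b = a
      · subst hba
        refine Set.Finite.subset Set.finite_empty ?_
        rintro n ⟨hna, hn⟩
        rw [if_pos hna, if_pos rfl, sub_self, abs_zero] at hn
        exact absurd hn (not_le.mpr hε)
      · refine (hAD b a hba).subset ?_
        rintro n ⟨hnb, hn⟩
        refine ⟨hnb, ?_⟩
        by_contra hna
        rw [if_neg hna, if_neg hba, sub_zero, abs_zero] at hn
        exact absurd hn (not_le.mpr hε)
    · intro ε hε
      refine (Set.finite_singleton a).subset ?_
      intro b hb
      simp only [Set.mem_setOf_eq] at hb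
      rw [Set.mem_singleton_iff]
      by_contra hba
      rw [if_neg hba, sub_zero, abs_zero] at hb
      exact absurd hb (not_le.mpr hε)
    · intro ε hε
      refine ⟨{a}, Set.Finite.subset Set.finite_empty ?_⟩
      rintro n ⟨hn, hn2⟩
      simp only [Set.mem_setOf_eq, sub_zero] at hn
      by_cases hna : n ∈ (a : Set ℕ)
      · exact hn2 (Set.mem_biUnion (Finset.mem_coe.mpr (Finset.mem_singleton_self a)) hna)
      · rw [if_neg hna, abs_zero] at hn
        exact absurd hn (not_le.mpr hε)
  exact ⟨⟨_, hcont⟩, lp.ext (funext fun n => rfl)⟩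

include hAD in
lemma toSeq_mem_EA (f : C(K A, ℝ)) : toSeq f ∈ EA A := by
  have hmem : (toSeq f : lpinf) ∈ closure ((Submodule.span ℝ (Gset A)) : Set lpinf) := by
    rw [Metric.mem_closure_iff]
    intro ε hε
    set δ := ε / 2 with hδ
    have hδ0 : 0 < δ := by positivity
    set Cs : Set (K A) := {y : K A | δ ≤ |f y - f (pt A)|} with hCs
    have hCclosed : IsClosed Cs :=
      isClosed_le continuous_const (f.continuous.sub continuous_const).abs
    have hCopen : IsOpen Csᶜ := hCclosed.isOpen_compl
    have hptmem : pt A ∈ Csᶜ := by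
      simp only [hCs, Set.mem_compl_iff, Set.mem_setOf_eq, sub_self, abs_zero, not_le]
      exact hδ0
    obtain ⟨hT, hF⟩ := hCopen.2 hptmem
    have hFa : ∀ a : ↥A, {n | n ∈ (a : Set ℕ) ∧ δ ≤ |f (pn A n) - f (pa A a)|}.Finite := by
      intro a
      have hnb : f ⁻¹' Metric.ball (f (pa A a)) δ ∈ nhds (pa A a) :=
        f.continuous.continuousAt.preimage_mem_nhds (Metric.ball_mem_nhds _ hδ0)
      rw [mem_nhds_pa] at hnb
      refine hnb.2.subset ?_
      rintro n ⟨hna, hn⟩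
      refine ⟨hna, fun hmem => ?_⟩
      simp only [Set.mem_preimage, Metric.mem_ball, Real.dist_eq] at hmem
      exact absurd hmem (not_lt.mpr hn)
    set T : Finset ↥A := hT.toFinset with hTdef
    set y0 : lpinf := f (pt A) • indSeq Set.univ +
      ∑ a ∈ T, (f (pa A a) - f (pt A)) • indSeq (a : Set ℕ) with hy0
    have hy0coord : ∀ n : ℕ, (y0 : ∀ _ : ℕ, ℝ) n = f (pt A) +
        ∑ a ∈ T, (f (pa A a) - f (pt A)) * (if n ∈ (a : Set ℕ) then (1:ℝ) else 0) := by
      intro n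
      rw [hy0, lp.coeFn_add, Pi.add_apply, lp.coeFn_smul, Pi.smul_apply, lp_sum_apply]
      have hterm : ∀ a : ↥A, ((((f (pa A a) - f (pt A)) • indSeq (a : Set ℕ) : lpinf)) :
          ∀ _ : ℕ, ℝ) n = (f (pa A a) - f (pt A)) * (if n ∈ (a : Set ℕ) then (1:ℝ) else 0) := by
        intro a
        rw [lp.coeFn_smul, Pi.smul_apply, indSeq_apply, smul_eq_mul]
      rw [Finset.sum_congr rfl (fun a _ => hterm a)]
      simp
    set S' : Set ℕ := {n | δ ≤ |f (pn A n) - (y0 : ∀ _ : ℕ, ℝ) n|} with hS'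
    set W : Set ℕ := ⋃ a ∈ T, ⋃ b ∈ T, {n | n ∈ (a : Set ℕ) ∧ n ∈ (b : Set ℕ) ∧ a ≠ b}
      with hW
    have hWfin : W.Finite := by
      refine Set.Finite.biUnion T.finite_toSet (fun a _ =>
        Set.Finite.biUnion T.finite_toSet (fun b _ => ?_))
      by_cases hab : a = b
      · refine Set.Finite.subset Set.finite_empty ?_
        rintro n ⟨-, -, hne⟩
        exact hne hab
      · exact (hAD a b hab).subset (fun n hn => ⟨hn.1, hn.2.1⟩)
    have hS'fin : S'.Finite := by
      refine ((hF.union hWfin).union (hT.biUnion (fun a _ => hFa a))).subset ?_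
      intro n hn
      by_cases hcase : ∃ a ∈ T, n ∈ (a : Set ℕ)
      · obtain ⟨a, haT, hna⟩ := hcase
        by_cases hWmem : n ∈ W
        · exact Or.inl (Or.inr hWmem)
        · have hsum : ∑ b ∈ T, (f (pa A b) - f (pt A)) *
              (if n ∈ (b : Set ℕ) then (1:ℝ) else 0) = f (pa A a) - f (pt A) := by
            rw [Finset.sum_eq_single a]
            · rw [if_pos hna, mul_one]
            · intro b hbT hba
              rw [if_neg, mul_zero]
              intro hnb
              refine hWmem ?_
              rw [hW]
              exact Set.mem_biUnion (Finset.mem_coe.mpr haT)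
                (Set.mem_biUnion (Finset.mem_coe.mpr hbT) ⟨hna, hnb, fun h => hba h.symm⟩)
            · intro h
              exact absurd haT h
          have hy0n : (y0 : ∀ _ : ℕ, ℝ) n = f (pa A a) := by
            rw [hy0coord n, hsum]
            ring
          refine Or.inr (Set.mem_biUnion (Set.Finite.mem_toFinset hT |>.mp haT) ?_)
          show n ∈ {n | n ∈ (a : Set ℕ) ∧ δ ≤ |f (pn A n) - f (pa A a)|}
          refine ⟨hna, ?_⟩
          rw [← hy0n]
          exact hn
      · push_neg at hcase
        have hsum0 : ∑ b ∈ T, (f (pa A b) - f (pt A)) *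
            (if n ∈ (b : Set ℕ) then (1:ℝ) else 0) = 0 :=
          Finset.sum_eq_zero (fun b hbT => by rw [if_neg (hcase b hbT), mul_zero])
        have hy0n : (y0 : ∀ _ : ℕ, ℝ) n = f (pt A) := by
          rw [hy0coord n, hsum0, add_zero]
        refine Or.inl (Or.inl ⟨?_, ?_⟩)
        · show pn A n ∉ Csᶜ
          rw [Set.notMem_compl_iff]
          show δ ≤ |f (pn A n) - f (pt A)|
          rw [← hy0n]
          exact hn
        · intro hmem
          obtain ⟨a, ha, hna⟩ := Set.mem_iUnion₂.mp hmem
          exact hcase a (hT.mem_toFinset.mpr ha) hna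
    set corrf : ∀ _ : ℕ, ℝ := fun n =>
      if n ∈ S' then f (pn A n) - (y0 : ∀ _ : ℕ, ℝ) n else 0 with hcorrf
    have hcorrmem : Memℓp corrf ∞ := by
      apply memℓp_infty
      apply Set.Finite.bddAbove
      refine Set.Finite.subset (((hS'fin.image (fun n => ‖corrf n‖)).insert 0)) ?_
      rintro x ⟨n, rfl⟩
      by_cases hn : n ∈ S'
      · exact Set.mem_insert_of_mem _ ⟨n, hn, rfl⟩
      · rw [hcorrf]
        simp only [if_neg hn, norm_zero]
        exact Set.mem_insert _ _
    set corr : lpinf := ⟨corrf, hcorrmem⟩ with hcorr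
    have hcorrG : corr ∈ Gset A := by
      refine Or.inl ⟨0, ?_⟩
      rw [← Nat.cofinite_eq_atTop]
      refine Filter.Tendsto.congr' ?_ tendsto_const_nhds
      rw [Filter.eventuallyEq_iff_exists_mem]
      refine ⟨{n | n ∉ S'}, ?_, fun n hn => ?_⟩
      · rw [Filter.mem_cofinite]
        refine hS'fin.subset ?_
        intro n hn
        simpa using hn
      · show (0:ℝ) = corrf n
        rw [hcorrf]
        simp only [if_neg hn]
    set y : lpinf := y0 + corr with hy
    have hyspan : y ∈ Submodule.span ℝ (Gset A) := by
      refine Submodule.add_mem _ (Submodule.add_mem _ ?_ ?_) (Submodule.subset_span hcorrG)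
      · refine Submodule.smul_mem _ _ (Submodule.subset_span (Or.inl ⟨1, ?_⟩))
        have : (fun n => (indSeq Set.univ : ∀ _ : ℕ, ℝ) n) = fun _ : ℕ => (1:ℝ) := by
          funext n
          simp
        rw [this]
        exact tendsto_const_nhds
      · exact Submodule.sum_mem _ (fun a _ => Submodule.smul_mem _ _
          (Submodule.subset_span (Or.inr ⟨(a : Set ℕ), a.2, rfl⟩)))
    refine ⟨y, hyspan, ?_⟩
    have hcoord : ∀ n : ℕ, ((toSeq f - y : lpinf) : ∀ _ : ℕ, ℝ) n
        = f (pn A n) - (y0 : ∀ _ : ℕ, ℝ) n - corrf n := by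
      intro n
      rw [hy, lp.coeFn_sub, Pi.sub_apply, lp.coeFn_add, Pi.add_apply, toSeq_apply]
      show f (pn A n) - ((y0 : ∀ _ : ℕ, ℝ) n + corrf n)
        = f (pn A n) - (y0 : ∀ _ : ℕ, ℝ) n - corrf n
      ring
    have hnorm : ‖(toSeq f - y : lpinf)‖ ≤ δ := by
      apply lp.norm_le_of_forall_le hδ0.le
      intro n
      rw [hcoord n]
      by_cases hn : n ∈ S'
      · rw [hcorrf]
        simp only [if_pos hn, sub_sub_cancel_left]
        simp [hδ0.le]
      · have h1 : corrf n = 0 := by rw [hcorrf]; simp only [if_neg hn]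
        rw [h1, sub_zero, Real.norm_eq_abs]
        have h2 : ¬ δ ≤ |f (pn A n) - (y0 : ∀ _ : ℕ, ℝ) n| := hn
        exact (not_le.mp h2).le
    calc dist (toSeq f) y = ‖(toSeq f - y : lpinf)‖ := dist_eq_norm _ _
      _ ≤ δ := hnorm
      _ < ε := by rw [hδ]; linarith
  rw [EA, ← SetLike.mem_coe, Submodule.topologicalClosure_coe]
  exact hmem

include hAD hA1 hA3 in
lemma range_toSeqL : LinearMap.range (toSeqL A) = EA A := by
  apply le_antisymm
  · rintro x ⟨f, rfl⟩
    exact toSeq_mem_EA hAD f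
  · apply Submodule.topologicalClosure_minimal
    · rw [Submodule.span_le]
      rintro x (⟨l, hl⟩ | ⟨s, hsA, rfl⟩)
      · obtain ⟨f, hf⟩ := exists_toSeq_eq_of_tendsto hAD x l hl
        exact ⟨f, hf⟩
      · obtain ⟨f, hf⟩ := exists_toSeq_eq_indSeq hAD (⟨s, hsA⟩ : ↥A)
        exact ⟨f, hf⟩
    · have hiso : Isometry (toSeqL A) :=
        AddMonoidHomClass.isometry_of_norm _ (fun f => norm_toSeq hAD hA1 hA3 f)
      have := hiso.isClosedEmbedding.isClosed_range
      rwa [LinearMap.coe_range]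

include hAD hA1 hA3 in
lemma nonempty_equiv : Nonempty ((EA A) ≃ₗᵢ[ℝ] C(K A, ℝ)) := by
  have hiso : Isometry (toSeqL A) :=
    AddMonoidHomClass.isometry_of_norm _ (fun f => norm_toSeq hAD hA1 hA3 f)
  have hinj : Function.Injective (toSeqL A) := hiso.injective
  refine ⟨LinearIsometryEquiv.symm
    { toLinearEquiv := (LinearEquiv.ofInjective (toSeqL A) hinj).trans
        (LinearEquiv.ofEq _ _ (range_toSeqL hAD hA1 hA3))
      norm_map' := ?_ }⟩
  intro f
  show ‖((LinearEquiv.ofInjective (toSeqL A) hinj).trans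
      (LinearEquiv.ofEq _ _ (range_toSeqL hAD hA1 hA3)) f)‖ = ‖f‖
  rw [Submodule.coe_norm, LinearEquiv.trans_apply, LinearEquiv.coe_ofEq_apply,
    LinearEquiv.ofInjective_apply]
  exact norm_toSeq hAD hA1 hA3 f

end Maps

end Mrowka

/-- let `E` be the closed linear span in `ℓ∞` of the canonical copy of `c`
(convergent sequences) together with the characteristic functions `χ_{N i}` of an infinite
almost disjoint family `(N i)` of infinite subsets of `ℕ`. Then `E` is isometrically
isomorphic to `C(K_E)` for a compact Hausdorff space `K_E` that is scattered of
Cantor–Bendixson height 3 (a Mrówka–Isbell compactum). -/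
theorem stmt14 (I : Type*) [Infinite I] (N : I → Set ℕ)
    (hinf : ∀ i, (N i).Infinite)
    (had : ∀ i j, i ≠ j → (N i ∩ N j).Finite)
    (chi : I → lp (fun _ : ℕ => ℝ) ∞)
    (hchi : ∀ i n, chi i n = if n ∈ N i then (1 : ℝ) else 0)
    (E : Submodule ℝ (lp (fun _ : ℕ => ℝ) ∞))
    (hE : E = (Submodule.span ℝ
      ({x : lp (fun _ : ℕ => ℝ) ∞ | ∃ l : ℝ, Filter.Tendsto (fun n => x n) Filter.atTop (nhds l)}
        ∪ Set.range chi)).topologicalClosure) :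
    ∃ (KE : Type) (_ : TopologicalSpace KE) (_ : CompactSpace KE) (_ : T2Space KE),
      Nonempty (E ≃ₗᵢ[ℝ] C(KE, ℝ)) ∧
      cbDeriv (cbDeriv (cbDeriv (Set.univ : Set KE))) = ∅ ∧
      cbDeriv (cbDeriv (Set.univ : Set KE)) ≠ ∅ := by
  classical
  set A : Set (Set ℕ) := Set.range N with hA
  have hNinj : Function.Injective N := by
    intro i j hij
    by_contra hne
    have hfin := had i j hne
    rw [hij, Set.inter_self] at hfin
    exact hinf j hfin
  have hAD : ∀ a b : ↥A, a ≠ b → ((a : Set ℕ) ∩ (b : Set ℕ)).Finite := by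
    rintro ⟨a, i, rfl⟩ ⟨b, j, rfl⟩ hab
    refine had i j ?_
    rintro rfl
    exact hab rfl
  have hA1 : ∀ a : ↥A, (a : Set ℕ).Infinite := by
    rintro ⟨a, i, rfl⟩
    exact hinf i
  have hA3 : A.Infinite := Set.infinite_range_of_injective hNinj
  refine ⟨Mrowka.K A, inferInstance, inferInstance, Mrowka.t2space hAD, ?_, ?_, ?_⟩
  · have hrange : Set.range chi = Mrowka.indSeq '' A := by
      ext x
      constructor
      · rintro ⟨i, rfl⟩
        exact ⟨N i, ⟨i, rfl⟩, (lp.ext (funext fun n => by rw [hchi i n]; rfl)).symm⟩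
      · rintro ⟨s, ⟨i, rfl⟩, rfl⟩
        exact ⟨i, lp.ext (funext fun n => by rw [hchi i n]; rfl)⟩
    have hEeq : E = Mrowka.EA A := by
      rw [hE]
      unfold Mrowka.EA Mrowka.Gset
      rw [hrange]
    obtain ⟨e⟩ := Mrowka.nonempty_equiv hAD hA1 hA3
    exact ⟨(LinearIsometryEquiv.ofEq E (Mrowka.EA A) hEeq).trans e⟩
  · rw [Mrowka.cbDeriv_univ hA1 hA3, Mrowka.cbDeriv_D1 hAD hA3, Mrowka.cbDeriv_pt]
  · rw [Mrowka.cbDeriv_univ hA1 hA3, Mrowka.cbDeriv_D1 hAD hA3]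
    exact Set.singleton_ne_empty _
end
end
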